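/- Suppose there exists a decomposition of the edge set of the complete u-partite graph K_u[g] (with parts of size g; together with a 1-factor removed when g(u-1) is odd) into α C_m-factors and β C_n-factors, and there exists an HW(g; m, n, α', β'). Then there exists an HW(gu; m, n, α + α', β + β'). -/

import Mathlib

open SimpleGraph

/-- A `C_k`-factor: a spanning 2-regular subgraph all of whose connected
components (necessarily cycles) have exactly `k` vertices. -/
def IsCycleFactor {V : Type*} (H : SimpleGraph V) (k : ℕ) : Prop :=
  (∀ v : V, (H.neighborSet v).ncard = 2) ∧
  (∀ v : V, (H.connectedComponentMk v).supp.ncard = k)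

/-- A 1-factor (perfect matching): every vertex has exactly one neighbour. -/
def IsOneFactor {V : Type*} (H : SimpleGraph V) : Prop :=
  ∀ v : V, (H.neighborSet v).ncard = 1

/-- `F 0, …, F (N-1)` partitions the edge set of `G`. -/
def IsDecompOn {V : Type*} (G : SimpleGraph V) (F : ℕ → SimpleGraph V) (N : ℕ) : Prop :=
  (∀ i < N, F i ≤ G) ∧
  (∀ i < N, ∀ j < N, i ≠ j → Disjoint (F i).edgeSet (F j).edgeSet) ∧
  G.edgeSet = ⋃ i ∈ Set.Iio N, (F i).edgeSet

/-- A Hamilton–Waterloo decomposition of a graph `G` into `α` `C_m`-factors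
and `β` `C_n`-factors. -/
def IsHWGraph {V : Type*} (G : SimpleGraph V) (m n α β : ℕ) : Prop :=
  ∃ F : ℕ → SimpleGraph V, IsDecompOn G F (α + β) ∧
    (∀ i < α, IsCycleFactor (F i) m) ∧
    (∀ i, α ≤ i → i < α + β → IsCycleFactor (F i) n)

/-- `HW v m n α β`: a partition of `E(K_v)` (for `v` odd) or of `E(K_v)` minus a
perfect matching (for `v` even) into `α` `C_m`-factors and `β` `C_n`-factors. -/
def HW (v m n α β : ℕ) : Prop :=
  ∃ I : SimpleGraph (Fin v),
    (Odd v → I = ⊥) ∧ (Even v → IsOneFactor I) ∧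
    IsHWGraph ((⊤ : SimpleGraph (Fin v)) \ I) m n α β

/-- The complete `u`-partite graph with parts of size `g`. -/
def Kpartite (u g : ℕ) : SimpleGraph (Fin u × Fin g) :=
  SimpleGraph.fromRel (fun a b => a.1 ≠ b.1)

/-- The Cayley graph on an additive group with connection set `S`. -/
def cayley (Γ : Type*) [AddGroup Γ] (S : Set Γ) : SimpleGraph Γ :=
  SimpleGraph.fromRel (fun a b => a - b ∈ S)

/-- `HW(K_u[g]; m, n, α, β)`: a partition of `E(K_u[g])` (minus a 1-factor when
`g (u - 1)` is odd) into `α` `C_m`-factors and `β` `C_n`-factors. -/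
def HWMultipartite (u g m n α β : ℕ) : Prop :=
  ∃ I : SimpleGraph (Fin u × Fin g),
    (¬ Odd (g * (u - 1)) → I = ⊥) ∧ (Odd (g * (u - 1)) → IsOneFactor I) ∧
    IsHWGraph (Kpartite u g \ I) m n α β

section Blowup
variable {V : Type*}

def blowup (u : ℕ) (H : SimpleGraph V) : SimpleGraph (Fin u × V) where
  Adj p q := p.1 = q.1 ∧ H.Adj p.2 q.2
  symm := ⟨fun p q h => ⟨h.1.symm, h.2.symm⟩⟩
  loopless := ⟨fun p h => H.loopless.irrefl p.2 h.2⟩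

lemma blowup_adj (u : ℕ) (H : SimpleGraph V) (p q : Fin u × V) :
    (blowup u H).Adj p q ↔ p.1 = q.1 ∧ H.Adj p.2 q.2 := Iff.rfl

lemma blowup_bot (u : ℕ) : blowup u (⊥ : SimpleGraph V) = ⊥ := by
  ext p q; simp [blowup_adj]

lemma blowup_mono (u : ℕ) {H K : SimpleGraph V} (h : H ≤ K) : blowup u H ≤ blowup u K :=
  fun _ _ hpq => ⟨hpq.1, h hpq.2⟩

lemma mk_inj (u : ℕ) (a : Fin u) : Function.Injective (Prod.mk a : V → Fin u × V) :=
  fun _ _ h => congrArg Prod.snd h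

lemma blowup_neighborSet (u : ℕ) (H : SimpleGraph V) (p : Fin u × V) :
    (blowup u H).neighborSet p = Prod.mk p.1 '' H.neighborSet p.2 := by
  ext q
  constructor
  · rintro ⟨h1, h2⟩
    exact ⟨q.2, h2, by rw [h1]⟩
  · rintro ⟨y, hy, rfl⟩; exact ⟨rfl, hy⟩

lemma blowup_reachable (u : ℕ) (H : SimpleGraph V) (p q : Fin u × V) :
    (blowup u H).Reachable p q ↔ p.1 = q.1 ∧ H.Reachable p.2 q.2 := by
  constructor
  · rintro ⟨w⟩
    induction w with
    | nil => exact ⟨rfl, Reachable.refl _⟩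
    | cons h _ ih => exact ⟨h.1.trans ih.1, (h.2.reachable).trans ih.2⟩
  · rintro ⟨h1, h2⟩
    obtain ⟨a, x⟩ := p; obtain ⟨b, y⟩ := q
    dsimp only at h1; subst h1
    exact h2.map (⟨fun z => (a, z), fun h => ⟨rfl, h⟩⟩ : H →g blowup u H)

lemma blowup_supp (u : ℕ) (H : SimpleGraph V) (p : Fin u × V) :
    ((blowup u H).connectedComponentMk p).supp
      = Prod.mk p.1 '' (H.connectedComponentMk p.2).supp := by
  ext q
  simp only [ConnectedComponent.mem_supp_iff, ConnectedComponent.eq, Set.mem_image]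
  constructor
  · intro h
    rw [blowup_reachable] at h
    exact ⟨q.2, h.2, by rw [← h.1]⟩
  · rintro ⟨y, hy, rfl⟩
    rw [blowup_reachable]
    exact ⟨rfl, hy⟩

lemma blowup_cycleFactor (u : ℕ) {H : SimpleGraph V} {k : ℕ} (h : IsCycleFactor H k) :
    IsCycleFactor (blowup u H) k := by
  constructor
  · intro p
    rw [blowup_neighborSet, Set.ncard_image_of_injective _ (mk_inj u p.1)]
    exact h.1 p.2
  · intro p
    rw [blowup_supp, Set.ncard_image_of_injective _ (mk_inj u p.1)]
    exact h.2 p.2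

lemma blowup_oneFactor (u : ℕ) {H : SimpleGraph V} (h : IsOneFactor H) :
    IsOneFactor (blowup u H) := by
  intro p
  rw [blowup_neighborSet, Set.ncard_image_of_injective _ (mk_inj u p.1)]
  exact h p.2

lemma blowup_edgeSet_disjoint (u : ℕ) {H K : SimpleGraph V}
    (h : Disjoint H.edgeSet K.edgeSet) :
    Disjoint (blowup u H).edgeSet (blowup u K).edgeSet := by
  rw [Set.disjoint_left] at h ⊢
  intro e he1 he2
  induction e using Sym2.ind with
  | _ p q =>
    rw [mem_edgeSet] at he1 he2
    exact h (mem_edgeSet _ |>.mpr he1.2) (mem_edgeSet _ |>.mpr he2.2)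

lemma blowup_edgeSet_iUnion (u : ℕ) {H : SimpleGraph V} {F : ℕ → SimpleGraph V} {N : ℕ}
    (h : H.edgeSet = ⋃ i ∈ Set.Iio N, (F i).edgeSet) :
    (blowup u H).edgeSet = ⋃ i ∈ Set.Iio N, (blowup u (F i)).edgeSet := by
  ext e
  induction e using Sym2.ind with
  | _ p q =>
    simp only [Set.mem_iUnion, Set.mem_Iio, mem_edgeSet, blowup_adj, exists_prop]
    constructor
    · rintro ⟨h1, h2⟩
      have : s(p.2, q.2) ∈ H.edgeSet := mem_edgeSet _ |>.mpr h2
      rw [h] at this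
      simp only [Set.mem_iUnion, Set.mem_Iio, mem_edgeSet, exists_prop] at this
      obtain ⟨i, hi, hadj⟩ := this
      exact ⟨i, hi, h1, hadj⟩
    · rintro ⟨i, hi, h1, h2⟩
      refine ⟨h1, ?_⟩
      have : s(p.2, q.2) ∈ H.edgeSet := by
        rw [h]; simp only [Set.mem_iUnion, Set.mem_Iio, mem_edgeSet, exists_prop]
        exact ⟨i, hi, h2⟩
      exact mem_edgeSet _ |>.mp this

end Blowup
section Comap
variable {V W : Type*} (e : V ≃ W)

lemma comap_equiv_le {G G' : SimpleGraph W} (h : G ≤ G') :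
    G.comap e ≤ G'.comap e := fun _ _ hpq => h hpq

lemma comap_equiv_bot : (⊥ : SimpleGraph W).comap e = ⊥ := by
  ext p q; simp

lemma comap_equiv_top : (⊤ : SimpleGraph W).comap e = ⊤ := by
  ext p q; simp [e.injective.ne_iff]

lemma comap_equiv_sdiff (G G' : SimpleGraph W) :
    (G \ G').comap e = G.comap e \ G'.comap e := by
  ext p q; simp

lemma comap_equiv_neighborSet (G : SimpleGraph W) (x : V) :
    (G.comap e).neighborSet x = e.symm '' G.neighborSet (e x) := by
  ext y
  simp only [mem_neighborSet, comap_adj, Set.mem_image]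
  constructor
  · intro h; exact ⟨e y, h, e.symm_apply_apply y⟩
  · rintro ⟨z, hz, rfl⟩; simpa using hz

lemma comap_equiv_reachable (G : SimpleGraph W) (x y : V) :
    (G.comap e).Reachable x y ↔ G.Reachable (e x) (e y) := by
  constructor
  · intro h
    exact h.map (⟨e, fun h' => h'⟩ : G.comap e →g G)
  · intro h
    have h2 : (G.comap e).Reachable (e.symm (e x)) (e.symm (e y)) :=
      h.map (⟨e.symm, fun {a b} hab => by simpa using hab⟩ : G →g G.comap e)
    simpa using h2

lemma comap_equiv_supp (G : SimpleGraph W) (x : V) :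
    ((G.comap e).connectedComponentMk x).supp
      = e.symm '' (G.connectedComponentMk (e x)).supp := by
  ext y
  simp only [SimpleGraph.ConnectedComponent.mem_supp_iff, SimpleGraph.ConnectedComponent.eq,
    Set.mem_image]
  rw [comap_equiv_reachable]
  constructor
  · intro h; exact ⟨e y, h, e.symm_apply_apply y⟩
  · rintro ⟨z, hz, rfl⟩; simpa using hz

lemma comap_equiv_cycleFactor {G : SimpleGraph W} {k : ℕ} (h : IsCycleFactor G k) :
    IsCycleFactor (G.comap e) k := by
  constructor
  · intro v
    rw [comap_equiv_neighborSet, Set.ncard_image_of_injective _ e.symm.injective]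
    exact h.1 _
  · intro v
    rw [comap_equiv_supp, Set.ncard_image_of_injective _ e.symm.injective]
    exact h.2 _

lemma comap_equiv_oneFactor {G : SimpleGraph W} (h : IsOneFactor G) :
    IsOneFactor (G.comap e) := by
  intro v
  rw [comap_equiv_neighborSet, Set.ncard_image_of_injective _ e.symm.injective]
  exact h _

lemma comap_edgeSet (f : V → W) (G : SimpleGraph W) :
    (G.comap f).edgeSet = Sym2.map f ⁻¹' G.edgeSet := by
  ext z
  induction z using Sym2.ind with
  | _ x y => simp [Sym2.map_pair_eq]

lemma comap_equiv_decomp {G : SimpleGraph W} {F : ℕ → SimpleGraph W} {N : ℕ}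
    (h : IsDecompOn G F N) :
    IsDecompOn (G.comap e) (fun i => (F i).comap e) N := by
  obtain ⟨hle, hdisj, hun⟩ := h
  refine ⟨fun i hi => comap_equiv_le e (hle i hi),
    fun i hi j hj hij => ?_, ?_⟩
  · rw [comap_edgeSet, comap_edgeSet]
    exact (hdisj i hi j hj hij).preimage _
  · rw [comap_edgeSet, hun]
    simp only [Set.preimage_iUnion, comap_edgeSet]

lemma comap_equiv_HW {G : SimpleGraph W} {m n a b : ℕ} (h : IsHWGraph G m n a b) :
    IsHWGraph (G.comap e) m n a b := by
  obtain ⟨F, hd, hm, hn⟩ := h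
  exact ⟨fun i => (F i).comap e, comap_equiv_decomp e hd,
    fun i hi => comap_equiv_cycleFactor e (hm i hi),
    fun i hi hi' => comap_equiv_cycleFactor e (hn i hi hi')⟩

end Comap
lemma Kpartite_adj (u g : ℕ) (p q : Fin u × Fin g) :
    (Kpartite u g).Adj p q ↔ p.1 ≠ q.1 := by
  rw [Kpartite, SimpleGraph.fromRel_adj]
  constructor
  · rintro ⟨-, h | h⟩
    · exact h
    · exact h.symm
  · intro h
    exact ⟨fun he => h (by rw [he]), Or.inl h⟩

lemma Kpartite_neighborSet (u g : ℕ) (p : Fin u × Fin g) :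
    (Kpartite u g).neighborSet p = {q | q.1 ≠ p.1} := by
  ext q
  rw [SimpleGraph.mem_neighborSet, Kpartite_adj]
  exact ⟨Ne.symm, Ne.symm⟩

lemma Kpartite_degree (u g : ℕ) (p : Fin u × Fin g) :
    ((Kpartite u g).neighborSet p).ncard = g * (u - 1) := by
  have h : (Kpartite u g).neighborSet p
      = ↑((Finset.univ.erase p.1) ×ˢ (Finset.univ : Finset (Fin g))) := by
    rw [Kpartite_neighborSet]
    ext q
    simp [Finset.mem_product, Finset.mem_erase]
  rw [h, Set.ncard_coe_finset, Finset.card_product,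
    Finset.card_erase_of_mem (Finset.mem_univ _), Finset.card_univ, Finset.card_univ,
    Fintype.card_fin, Fintype.card_fin, Nat.mul_comm]

/-- Every vertex in a graph decomposed into 2-regular subgraphs has even degree. -/
lemma decomp_even_degree {V : Type*} [Fintype V] {G : SimpleGraph V}
    {F : ℕ → SimpleGraph V} {N : ℕ} (hd : IsDecompOn G F N)
    (h2 : ∀ i < N, ∀ w : V, ((F i).neighborSet w).ncard = 2) (v : V) :
    Even ((G.neighborSet v).ncard) := by
  obtain ⟨hle, hdisj, hun⟩ := hd
  have hnb : G.neighborSet v = ⋃ i ∈ Set.Iio N, (F i).neighborSet v := by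
    ext x
    simp only [SimpleGraph.mem_neighborSet, Set.mem_iUnion, Set.mem_Iio, exists_prop]
    constructor
    · intro h
      have : s(v, x) ∈ G.edgeSet := (SimpleGraph.mem_edgeSet G).mpr h
      rw [hun] at this
      simp only [Set.mem_iUnion, Set.mem_Iio, SimpleGraph.mem_edgeSet, exists_prop] at this
      exact this
    · rintro ⟨i, hi, h⟩
      exact hle i hi h
  rw [hnb]
  have key : ∀ M, M ≤ N → Even ((⋃ i ∈ Set.Iio M, (F i).neighborSet v).ncard) := by
    intro M
    induction M with
    | zero => simp
    | succ M ih =>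
      intro hM
      have hU : (⋃ i ∈ Set.Iio (M + 1), (F i).neighborSet v)
          = (⋃ i ∈ Set.Iio M, (F i).neighborSet v) ∪ (F M).neighborSet v := by
        ext x
        simp only [Set.mem_iUnion, Set.mem_Iio, Set.mem_union, exists_prop]
        constructor
        · rintro ⟨i, hi, hx⟩
          rcases Nat.lt_or_ge i M with h | h
          · exact Or.inl ⟨i, h, hx⟩
          · have : i = M := by omega
            exact Or.inr (this ▸ hx)
        · rintro (⟨i, hi, hx⟩ | hx)
          · exact ⟨i, by omega, hx⟩
          · exact ⟨M, by omega, hx⟩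
      have hdj : Disjoint (⋃ i ∈ Set.Iio M, (F i).neighborSet v) ((F M).neighborSet v) := by
        rw [Set.disjoint_left]
        intro x hx hxM
        simp only [Set.mem_iUnion, Set.mem_Iio, exists_prop] at hx
        obtain ⟨i, hi, hx⟩ := hx
        have := hdisj i (by omega) M (by omega) (by omega)
        exact Set.disjoint_left.mp this ((SimpleGraph.mem_edgeSet _).mpr hx)
          ((SimpleGraph.mem_edgeSet _).mpr hxM)
      rw [hU, Set.ncard_union_eq hdj (Set.toFinite _) (Set.toFinite _), h2 M (by omega) v]
      exact (ih (by omega)).add (by decide)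
  exact key N le_rfl

theorem stmt_6 (u g m n α β α' β' : ℕ)
    (h1 : HWMultipartite u g m n α β) (h2 : HW g m n α' β') :
    HW (g * u) m n (α + α') (β + β') := by
  classical
  obtain ⟨Im, hIm0, hIm1, hHWm⟩ := h1
  obtain ⟨I', hI'0, hI'1, hHW'⟩ := h2
  obtain ⟨Fm, hDm, hFmm, hFmn⟩ := hHWm
  obtain ⟨F', hD', hF'm, hF'n⟩ := hHW'
  -- Step 1: the 1-factor removed from the multipartite graph lies inside it
  have hImK : Im ≤ Kpartite u g := by
    by_cases hodd : Odd (g * (u - 1))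
    · intro p q hpq
      rw [Kpartite_adj]
      by_contra hc
      obtain ⟨q0, hq0⟩ := Set.ncard_eq_one.mp (hIm1 hodd p)
      have hq : q ∈ Im.neighborSet p := hpq
      rw [hq0, Set.mem_singleton_iff] at hq
      subst hq
      have hno : ¬ (Kpartite u g).Adj p q := fun h => (Kpartite_adj u g p q).mp h hc
      have hset : (Kpartite u g \ Im).neighborSet p = (Kpartite u g).neighborSet p := by
        ext r
        simp only [SimpleGraph.mem_neighborSet, SimpleGraph.sdiff_adj]
        constructor
        · rintro ⟨h1, -⟩; exact h1
        · intro h1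
          refine ⟨h1, fun h2 => ?_⟩
          have hr : r ∈ Im.neighborSet p := h2
          rw [hq0, Set.mem_singleton_iff] at hr
          subst hr
          exact hno h1
      have h2' : ∀ i < α + β, ∀ w : Fin u × Fin g, ((Fm i).neighborSet w).ncard = 2 := by
        intro i hi w
        rcases Nat.lt_or_ge i α with h | h
        · exact (hFmm i h).1 w
        · exact (hFmn i h hi).1 w
      have heven := decomp_even_degree hDm h2' p
      rw [hset, Kpartite_degree] at heven
      exact (Nat.not_even_iff_odd.mpr hodd) heven
    · rw [hIm0 hodd]; exact bot_le
  -- Step 2: splitting the complete graph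
  have hsplit : (⊤ : SimpleGraph (Fin u × Fin g)) \ (Im ⊔ blowup u I')
      = (Kpartite u g \ Im) ⊔ blowup u ((⊤ : SimpleGraph (Fin g)) \ I') := by
    ext p q
    simp only [SimpleGraph.sdiff_adj, SimpleGraph.sup_adj, SimpleGraph.top_adj, blowup_adj,
      Kpartite_adj]
    have hpq : p ≠ q ↔ (p.1 ≠ q.1 ∨ p.2 ≠ q.2) := by
      rw [Ne, Prod.ext_iff]; tauto
    have hIm' : Im.Adj p q → p.1 ≠ q.1 := fun h => (Kpartite_adj u g p q).mp (hImK h)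
    by_cases hf : p.1 = q.1
    · have hnIm : ¬ Im.Adj p q := fun h => hIm' h hf
      simp only [hf, hpq, ne_eq, not_true_eq_false, false_or]
      tauto
    · simp only [hpq, hf, ne_eq, not_false_eq_true, true_or, true_and, false_and, or_false]
      try tauto
  -- Step 3: properties of the removed graph
  have hbot : Odd (g * u) → Im ⊔ blowup u I' = ⊥ := by
    intro h
    obtain ⟨hg, hu⟩ := Nat.odd_mul.mp h
    have h1 : ¬ Odd (g * (u - 1)) :=
      Nat.not_odd_iff_even.mpr ((Nat.Odd.sub_odd hu odd_one).mul_left g)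
    rw [hIm0 h1, hI'0 hg, blowup_bot]
    simp
  have hfac : Even (g * u) → IsOneFactor (Im ⊔ blowup u I') := by
    intro h
    by_cases hg : Even g
    · have h1 : ¬ Odd (g * (u - 1)) := Nat.not_odd_iff_even.mpr (hg.mul_right _)
      rw [hIm0 h1, bot_sup_eq]
      exact blowup_oneFactor u (hI'1 hg)
    · have hgo : Odd g := Nat.not_even_iff_odd.mp hg
      have hu : Even u := by
        rcases Nat.even_mul.mp h with h' | h'
        · exact absurd h' hg
        · exact h'
      rcases Nat.eq_zero_or_pos u with rfl | hu0
      · intro v; exact v.1.elim0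
      · have hu1 : Odd (u - 1) := Nat.Even.sub_odd hu0 hu odd_one
        have hodd : Odd (g * (u - 1)) := Nat.odd_mul.mpr ⟨hgo, hu1⟩
        rw [hI'0 hgo, blowup_bot, sup_bot_eq]
        exact hIm1 hodd
  -- Step 4: combined decomposition
  obtain ⟨hFmle, hFmdisj, hFmun⟩ := hDm
  obtain ⟨hF'le, hF'disj, hF'un⟩ := hD'
  set T := α + α' + (β + β') with hT
  set FT : ℕ → SimpleGraph (Fin u × Fin g) := fun i =>
    if i < α then Fm i
    else if i < α + α' then blowup u (F' (i - α))
    else if i < α + α' + β then Fm (i - α')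
    else blowup u (F' (i - α - β)) with hFT
  have hFT1 : ∀ i, i < α → FT i = Fm i := fun i hi => by
    simp only [hFT]; rw [if_pos hi]
  have hFT2 : ∀ i, α ≤ i → i < α + α' → FT i = blowup u (F' (i - α)) := fun i hi1 hi2 => by
    simp only [hFT]; rw [if_neg (by omega), if_pos hi2]
  have hFT3 : ∀ i, α + α' ≤ i → i < α + α' + β → FT i = Fm (i - α') := fun i hi1 hi2 => by
    simp only [hFT]; rw [if_neg (by omega), if_neg (by omega), if_pos hi2]
  have hFT4 : ∀ i, α + α' + β ≤ i → FT i = blowup u (F' (i - α - β)) := fun i hi1 => by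
    simp only [hFT]; rw [if_neg (by omega), if_neg (by omega), if_neg (by omega)]
  have main : ∀ k, k < T →
      (k < α ∧ FT k = Fm k) ∨
      (α ≤ k ∧ k < α + α' ∧ FT k = blowup u (F' (k - α))) ∨
      (α + α' ≤ k ∧ k < α + α' + β ∧ FT k = Fm (k - α')) ∨
      (α + α' + β ≤ k ∧ FT k = blowup u (F' (k - α - β))) := by
    intro k hk
    rcases Nat.lt_or_ge k α with h | h
    · exact Or.inl ⟨h, hFT1 k h⟩
    rcases Nat.lt_or_ge k (α + α') with h2 | h2
    · exact Or.inr (Or.inl ⟨h, h2, hFT2 k h h2⟩)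
    rcases Nat.lt_or_ge k (α + α' + β) with h3 | h3
    · exact Or.inr (Or.inr (Or.inl ⟨h2, h3, hFT3 k h2 h3⟩))
    · exact Or.inr (Or.inr (Or.inr ⟨h3, hFT4 k h3⟩))
  have hKb : ∀ A : SimpleGraph (Fin u × Fin g), A ≤ Kpartite u g →
      ∀ H : SimpleGraph (Fin g), Disjoint A.edgeSet (blowup u H).edgeSet := by
    intro A hA H
    rw [Set.disjoint_left]
    intro e he1 he2
    induction e using Sym2.ind with
    | _ p q =>
      rw [SimpleGraph.mem_edgeSet] at he1 he2
      exact (Kpartite_adj u g p q).mp (hA he1) he2.1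
  have hFmK : ∀ j, j < α + β → Fm j ≤ Kpartite u g := fun j hj =>
    le_trans (hFmle j hj) sdiff_le
  have hdisjT : ∀ i < T, ∀ j < T, i ≠ j → Disjoint (FT i).edgeSet (FT j).edgeSet := by
    intro i hi j hj hij
    rcases main i hi with ⟨hi1, hie⟩ | ⟨hi1, hi2, hie⟩ | ⟨hi1, hi2, hie⟩ | ⟨hi1, hie⟩ <;>
      rcases main j hj with ⟨hj1, hje⟩ | ⟨hj1, hj2, hje⟩ | ⟨hj1, hj2, hje⟩ | ⟨hj1, hje⟩ <;>
      rw [hie, hje] <;>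
      first
        | exact hFmdisj _ (by omega) _ (by omega) (by omega)
        | exact hKb _ (hFmK _ (by omega)) _
        | exact (hKb _ (hFmK _ (by omega)) _).symm
        | exact blowup_edgeSet_disjoint u (hF'disj _ (by omega) _ (by omega) (by omega))
  have hleT : ∀ i < T, FT i ≤ (Kpartite u g \ Im) ⊔ blowup u (⊤ \ I') := by
    intro i hi
    rcases main i hi with ⟨h1, he⟩ | ⟨h1, h2, he⟩ | ⟨h1, h2, he⟩ | ⟨h1, he⟩ <;> rw [he]
    · exact le_sup_of_le_left (hFmle i (by omega))
    · exact le_sup_of_le_right (blowup_mono u (hF'le _ (by omega)))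
    · exact le_sup_of_le_left (hFmle _ (by omega))
    · exact le_sup_of_le_right (blowup_mono u (hF'le _ (by omega)))
  have hunT : ((Kpartite u g \ Im) ⊔ blowup u (⊤ \ I')).edgeSet
      = ⋃ i ∈ Set.Iio T, (FT i).edgeSet := by
    rw [SimpleGraph.edgeSet_sup]
    ext e
    simp only [Set.mem_union, Set.mem_iUnion, Set.mem_Iio, exists_prop]
    constructor
    · rintro (he | he)
      · rw [hFmun] at he
        simp only [Set.mem_iUnion, Set.mem_Iio, exists_prop] at he
        obtain ⟨j, hj, hej⟩ := he
        rcases Nat.lt_or_ge j α with h | h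
        · exact ⟨j, by omega, by rw [hFT1 j h]; exact hej⟩
        · refine ⟨j + α', by omega, ?_⟩
          rw [hFT3 (j + α') (by omega) (by omega)]
          have hjj : j + α' - α' = j := by omega
          rw [hjj]; exact hej
      · rw [blowup_edgeSet_iUnion u hF'un] at he
        simp only [Set.mem_iUnion, Set.mem_Iio, exists_prop] at he
        obtain ⟨j, hj, hej⟩ := he
        rcases Nat.lt_or_ge j α' with h | h
        · refine ⟨j + α, by omega, ?_⟩
          rw [hFT2 (j + α) (by omega) (by omega)]
          have hjj : j + α - α = j := by omega
          rw [hjj]; exact hej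
        · refine ⟨j + α + β, by omega, ?_⟩
          rw [hFT4 (j + α + β) (by omega)]
          have hjj : j + α + β - α - β = j := by omega
          rw [hjj]; exact hej
    · rintro ⟨i, hi, hei⟩
      rcases main i hi with ⟨h1, he⟩ | ⟨h1, h2, he⟩ | ⟨h1, h2, he⟩ | ⟨h1, he⟩ <;> rw [he] at hei
      · left
        have : e ∈ (Kpartite u g \ Im).edgeSet :=
          SimpleGraph.edgeSet_mono (hFmle i (by omega)) hei
        exact this
      · right
        exact SimpleGraph.edgeSet_mono (blowup_mono u (hF'le _ (by omega))) hei
      · left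
        exact SimpleGraph.edgeSet_mono (hFmle _ (by omega)) hei
      · right
        exact SimpleGraph.edgeSet_mono (blowup_mono u (hF'le _ (by omega))) hei
  have hmfac : ∀ i < α + α', IsCycleFactor (FT i) m := by
    intro i hi
    rcases Nat.lt_or_ge i α with h | h
    · rw [hFT1 i h]; exact hFmm i h
    · rw [hFT2 i h hi]; exact blowup_cycleFactor u (hF'm _ (by omega))
  have hnfac : ∀ i, α + α' ≤ i → i < T → IsCycleFactor (FT i) n := by
    intro i hi1 hi2
    rcases Nat.lt_or_ge i (α + α' + β) with h | h
    · rw [hFT3 i hi1 h]; exact hFmn _ (by omega) (by omega)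
    · rw [hFT4 i h]; exact blowup_cycleFactor u (hF'n _ (by omega) (by omega))
  have hHWtot : IsHWGraph ((⊤ : SimpleGraph (Fin u × Fin g)) \ (Im ⊔ blowup u I'))
      m n (α + α') (β + β') := by
    rw [hsplit]
    exact ⟨FT, ⟨hleT, hdisjT, hunT⟩, hmfac, hnfac⟩
  -- Step 5: transport along an equivalence
  let e : Fin (g * u) ≃ Fin u × Fin g :=
    (finCongr (Nat.mul_comm g u)).trans finProdFinEquiv.symm
  refine ⟨(Im ⊔ blowup u I').comap e, ?_, ?_, ?_⟩
  · intro hodd; rw [hbot hodd]; exact comap_equiv_bot e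
  · intro heven; exact comap_equiv_oneFactor e (hfac heven)
  · have htr := comap_equiv_HW e hHWtot
    rwa [comap_equiv_sdiff, comap_equiv_top] at htr
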